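/- A flow f on a network is maximal (has maximum net flow) if and only if there is no augmenting path (directed path from source to sink) in the residual graph G_f. -/

import Mathlib

open Finset

/-- A network in the antisymmetric formulation: a capacity function on pairs of
vertices (zero on non-edges), with a source `s` (no edges into it) and a sink
`t` (no edges out of it). -/
structure ANetwork (V : Type) [Fintype V] [DecidableEq V] where
  c : V → V → ℝ
  s : V
  t : V
  hst : s ≠ t
  c_nonneg : ∀ u v, 0 ≤ c u v
  no_into_s : ∀ v, c v s = 0
  no_out_t : ∀ v, c t v = 0

variable {V : Type} [Fintype V] [DecidableEq V]

/-- A flow in the antisymmetric formulation: an antisymmetric function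
respecting capacities with conservation of flow at every vertex other than the
source and the sink. -/
def AFlow (N : ANetwork V) (f : V → V → ℝ) : Prop :=
  (∀ u v, f u v = - f v u) ∧ (∀ u v, f u v ≤ N.c u v) ∧
  ∀ u, u ≠ N.s → u ≠ N.t → ∑ v, f u v = 0

/-- The net flow: the total amount flowing out of the source. -/
def aValue (N : ANetwork V) (f : V → V → ℝ) : ℝ := ∑ v, f N.s v

/-- The residual capacity of a pair of vertices. -/
def resCap (N : ANetwork V) (f : V → V → ℝ) (u v : V) : ℝ := N.c u v - f u v

/-- `(u, v)` is an edge of the residual graph `G_f` iff its residual capacity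
is positive. -/
def ResEdge (N : ANetwork V) (f : V → V → ℝ) (u v : V) : Prop :=
  0 < resCap N f u v

/-- An augmenting path exists: a directed path from the source to the sink in
the residual graph. -/
def ExistsAugPath (N : ANetwork V) (f : V → V → ℝ) : Prop :=
  ∃ p : List V, List.Chain (ResEdge N f) N.s p ∧
    (N.s :: p).getLast (List.cons_ne_nil _ _) = N.t

section Helpers

lemma getLast_suffix' {α : Type} {l m : List α} (h : l <:+ m) (hl : l ≠ []) (hm : m ≠ []) :
    m.getLast hm = l.getLast hl := by
  obtain ⟨pre, rfl⟩ := h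
  exact List.getLast_append_right hl

lemma exists_nodup_chain' {α : Type} (R : α → α → Prop) {a b : α}
    (h : Relation.ReflTransGen R a b) :
    ∃ l : List α, List.Chain R a l ∧ (a :: l).getLast (by simp) = b ∧ (a :: l).Nodup := by
  induction h using Relation.ReflTransGen.head_induction_on with
  | refl => exact ⟨[], List.Chain.nil, rfl, List.nodup_singleton b⟩
  | head hac _ ih =>
    rename_i a c _
    obtain ⟨l, hchain, hlast, hnodup⟩ := ih
    by_cases hmem : a ∈ c :: l
    · obtain ⟨pre, suf, hsplit⟩ := List.append_of_mem hmem
      have hsuffix : (a :: suf) <:+ (c :: l) := ⟨pre, hsplit.symm⟩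
      have hch : List.Chain' R (c :: l) := hchain
      have hchain' : List.Chain' R (a :: suf) := hch.suffix hsuffix
      have hlast' : (a :: suf).getLast (by simp) = b := by
        rw [← getLast_suffix' hsuffix (by simp) (by simp), hlast]
      refine ⟨suf, hchain', hlast', hnodup.sublist hsuffix.sublist⟩
    · exact ⟨c :: l, List.Chain.cons hac hchain, hlast, by simp [hnodup, hmem]⟩

lemma chain'_zip' {α : Type} {R : α → α → Prop} :
    ∀ {L : List α}, List.Chain' R L → ∀ e ∈ L.zip L.tail, R e.1 e.2
  | [], _, e, he => by simp at he
  | [a], _, e, he => by simp at he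
  | a :: b :: l, h, e, he => by
    rw [List.Chain', List.isChain_cons_cons] at h
    simp only [List.zip_cons_cons, List.tail_cons, List.mem_cons] at he
    rcases he with rfl | he
    · exact h.1
    · exact chain'_zip' h.2 e he

lemma telescope' {α : Type} (φ : α → ℝ) :
    ∀ (L : List α) (h : L ≠ []),
      ((L.zip L.tail).map fun e => φ e.1 - φ e.2).sum = φ (L.head h) - φ (L.getLast h)
  | [], h => absurd rfl h
  | [a], _ => by simp
  | a :: b :: l, _ => by
    have := telescope' φ (b :: l) (by simp)
    simp only [List.zip_cons_cons, List.tail_cons, List.map_cons, List.sum_cons] at *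
    rw [this]
    rw [List.getLast_cons (by simp : (b :: l : List α) ≠ [])]
    simp only [List.head_cons]
    ring

lemma sum_map_sub' {α : Type} (l : List α) (φ ψ : α → ℝ) :
    (l.map fun e => φ e - ψ e).sum = (l.map φ).sum - (l.map ψ).sum := by
  induction l with
  | nil => simp
  | cons a l ih => simp [ih]; ring

lemma sum_ite_count' {α : Type} [DecidableEq α] :
    ∀ (l : List α), l.Nodup → ∀ (x : α),
      (l.map fun e => if e = x then (1:ℝ) else 0).sum = if x ∈ l then 1 else 0
  | [], _, x => by simp
  | a :: l, hnd, x => by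
    have ha : a ∉ l := (List.nodup_cons.mp hnd).1
    have ih := sum_ite_count' l (List.nodup_cons.mp hnd).2 x
    simp only [List.map_cons, List.sum_cons, ih, List.mem_cons]
    by_cases h : a = x
    · subst h
      simp [ha]
    · simp [h, Ne.symm h]

lemma nodup_zip_tail' {α : Type} {L : List α} (h : L.Nodup) : (L.zip L.tail).Nodup := by
  have h2 : (L.zip L.tail).map Prod.snd = L.tail :=
    List.map_snd_zip (by simp [List.length_tail])
  exact List.Nodup.of_map Prod.snd (by rw [h2]; exact h.tail)

lemma sum_finset_list' {α V : Type} [Fintype V] (l : List α) (k : V → α → ℝ) :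
    ∑ v, (l.map (k v)).sum = (l.map fun e => ∑ v, k v e).sum := by
  induction l with
  | nil => simp
  | cons a l ih => simp [Finset.sum_add_distrib, ih]

lemma not_both_dir' {α : Type} [DecidableEq α] {L : List α} (h : L.Nodup) {u v : α}
    (h1 : (u, v) ∈ L.zip L.tail) (h2 : (v, u) ∈ L.zip L.tail) : False := by
  rw [List.mem_iff_getElem] at h1 h2
  obtain ⟨i, hi, hie⟩ := h1
  obtain ⟨j, hj, hje⟩ := h2
  rw [List.length_zip, List.length_tail] at hi hj
  have hi' : i < L.length - 1 := lt_min_iff.mp hi |>.2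
  have hj' : j < L.length - 1 := lt_min_iff.mp hj |>.2
  rw [List.getElem_zip, List.getElem_tail, Prod.mk.injEq] at hie hje
  have e1 : L[i]'(by omega) = u := hie.1
  have e2 : L[i+1]'(by omega) = v := hie.2
  have e3 : L[j]'(by omega) = v := hje.1
  have e4 : L[j+1]'(by omega) = u := hje.2
  have hij : i + 1 = j :=
    (h.getElem_inj_iff (hi := by omega) (hj := by omega)).mp (e2.trans e3.symm)
  have hji : j + 1 = i :=
    (h.getElem_inj_iff (hi := by omega) (hj := by omega)).mp (e4.trans e1.symm)
  omega

end Helpers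

/-- a flow is maximal iff there is no augmenting path in the
residual graph. -/
theorem max_iff_no_augmenting_path (N : ANetwork V) (f : V → V → ℝ)
    (hf : AFlow N f) :
    (∀ g, AFlow N g → aValue N g ≤ aValue N f) ↔ ¬ ExistsAugPath N f := by
  classical
  constructor
  · -- max → no augmenting path
    intro hmax haug
    obtain ⟨p, hchain, hlast⟩ := haug
    have hrt : Relation.ReflTransGen (ResEdge N f) N.s N.t :=
      List.relationReflTransGen_of_exists_isChain_cons p hchain hlast
    obtain ⟨l, hch, hl, hnd⟩ := exists_nodup_chain' _ hrt
    set L : List V := N.s :: l with hLdef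
    have hLne : L ≠ [] := by simp [hLdef]
    have hlne : l ≠ [] := by
      intro h
      apply N.hst
      rw [← hl]
      simp [hLdef, h]
    set E : List (V × V) := L.zip L.tail with hEdef
    have hEne : E ≠ [] := by
      rcases l with _ | ⟨b, l'⟩
      · exact absurd rfl hlne
      · simp [hEdef, hLdef]
    have hEmem : ∀ e ∈ E, ResEdge N f e.1 e.2 := chain'_zip' hch
    have hEnd : E.Nodup := nodup_zip_tail' hnd
    -- the bottleneck
    set T : Finset (V × V) := E.toFinset with hTdef
    have hTne : T.Nonempty := by
      rcases E with _ | ⟨e, E'⟩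
      · exact absurd rfl hEne
      · exact ⟨e, by simp [hTdef]⟩
    set δ : ℝ := T.inf' hTne (fun e => resCap N f e.1 e.2) with hδdef
    have hδpos : 0 < δ := by
      rw [hδdef, Finset.lt_inf'_iff]
      intro e he
      exact hEmem e (by simpa [hTdef] using he)
    have hδle : ∀ e ∈ E, δ ≤ resCap N f e.1 e.2 := by
      intro e he
      exact Finset.inf'_le _ (by simp [hTdef, he])
    -- the augmentation indicator
    set ind : V → V → ℝ := fun u v =>
      (E.map fun e => (if e = (u, v) then (1:ℝ) else 0) - (if e = (v, u) then 1 else 0)).sum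
      with hinddef
    have ind_mem : ∀ u v, (u, v) ∈ E → ind u v = 1 := by
      intro u v huv
      rw [hinddef]
      simp only
      rw [sum_map_sub', sum_ite_count' E hEnd, sum_ite_count' E hEnd,
        if_pos huv, if_neg (fun h => not_both_dir' hnd huv h)]
      norm_num
    have ind_nonpos : ∀ u v, (u, v) ∉ E → ind u v ≤ 0 := by
      intro u v huv
      rw [hinddef]
      simp only
      rw [sum_map_sub', sum_ite_count' E hEnd, sum_ite_count' E hEnd, if_neg huv]
      by_cases h : (v, u) ∈ E <;> simp [h]
    have ind_antisym : ∀ u v, ind v u = - ind u v := by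
      intro u v
      rw [hinddef]
      simp only
      rw [sum_map_sub', sum_map_sub', sum_ite_count' E hEnd, sum_ite_count' E hEnd]
      ring
    -- row sums of the indicator
    have ind_row : ∀ u, ∑ v, ind u v =
        (if N.s = u then (1:ℝ) else 0) - (if N.t = u then 1 else 0) := by
      intro u
      rw [hinddef]
      simp only
      rw [sum_finset_list']
      have inner : ∀ e : V × V,
          (∑ v, ((if e = (u, v) then (1:ℝ) else 0) - (if e = (v, u) then 1 else 0)))
          = (if e.1 = u then (1:ℝ) else 0) - (if e.2 = u then 1 else 0) := by
        rintro ⟨a, b⟩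
        rw [Finset.sum_sub_distrib]
        congr 1
        · by_cases h : a = u
          · subst h
            simp [Prod.mk.injEq]
          · simp [Prod.mk.injEq, h]
        · by_cases h : b = u
          · subst h
            simp [Prod.mk.injEq]
          · simp [Prod.mk.injEq, h]
      calc (E.map fun e => ∑ v, ((if e = (u, v) then (1:ℝ) else 0)
              - (if e = (v, u) then 1 else 0))).sum
          = (E.map fun e => (if e.1 = u then (1:ℝ) else 0)
              - (if e.2 = u then 1 else 0)).sum := by
            congr 1
            exact List.map_congr_left fun e _ => inner e
        _ = (if (L.head hLne) = u then (1:ℝ) else 0)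
              - (if (L.getLast hLne) = u then 1 else 0) := by
            exact telescope' (fun x => if x = u then (1:ℝ) else 0) L hLne
        _ = (if N.s = u then (1:ℝ) else 0) - (if N.t = u then 1 else 0) := by
            have h1 : L.head hLne = N.s := rfl
            have h2 : L.getLast hLne = N.t := hl
            rw [h1, h2]
    -- the augmented flow
    set g : V → V → ℝ := fun u v => f u v + δ * ind u v with hgdef
    have hg : AFlow N g := by
      refine ⟨?_, ?_, ?_⟩
      · intro u v
        rw [hgdef]
        simp only
        rw [hf.1 u v, ind_antisym u v]
        ring
      · intro u v
        by_cases huv : (u, v) ∈ E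
        · have := hδle _ huv
          rw [hgdef]
          simp only
          rw [ind_mem u v huv]
          simp only [resCap] at this
          linarith
        · have h1 := ind_nonpos u v huv
          have h2 := hf.2.1 u v
          rw [hgdef]
          simp only
          nlinarith
      · intro u hus hut
        rw [hgdef]
        simp only
        rw [Finset.sum_add_distrib, hf.2.2 u hus hut, ← Finset.mul_sum, ind_row u]
        rw [if_neg (fun h => hus h.symm), if_neg (fun h => hut h.symm)]
        ring
    have hval : aValue N g = aValue N f + δ := by
      rw [aValue, aValue, hgdef]
      simp only
      rw [Finset.sum_add_distrib, ← Finset.mul_sum, ind_row N.s]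
      rw [if_pos rfl, if_neg (fun h => N.hst h.symm)]
      ring
    have := hmax g hg
    rw [hval] at this
    linarith
  · -- no augmenting path → max
    intro hno g hg
    set S : Finset V := Finset.univ.filter
      (fun v => Relation.ReflTransGen (ResEdge N f) N.s v) with hSdef
    have hsS : N.s ∈ S := by
      simp only [hSdef, Finset.mem_filter, Finset.mem_univ, true_and]
      exact Relation.ReflTransGen.refl
    have htS : N.t ∉ S := by
      intro h
      apply hno
      have hrt : Relation.ReflTransGen (ResEdge N f) N.s N.t := by
        simpa [hSdef] using h
      obtain ⟨l, hch, hl, _⟩ := exists_nodup_chain' _ hrt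
      exact ⟨l, hch, hl⟩
    have cut : ∀ h : V → V → ℝ, AFlow N h →
        aValue N h = ∑ u ∈ S, ∑ v ∈ Sᶜ, h u v := by
      intro h hh
      have step1 : ∑ u ∈ S, ∑ v, h u v = aValue N h := by
        rw [Finset.sum_eq_single_of_mem N.s hsS]
        · rfl
        · intro u hu hus
          exact hh.2.2 u hus (fun hut => htS (hut ▸ hu))
      have step2 : ∑ u ∈ S, ∑ v ∈ S, h u v = 0 := by
        have hX : ∑ u ∈ S, ∑ v ∈ S, h u v = - ∑ u ∈ S, ∑ v ∈ S, h u v := by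
          calc ∑ u ∈ S, ∑ v ∈ S, h u v
              = ∑ u ∈ S, ∑ v ∈ S, -(h v u) :=
                Finset.sum_congr rfl fun u _ => Finset.sum_congr rfl fun v _ => hh.1 u v
            _ = - ∑ u ∈ S, ∑ v ∈ S, h v u := by simp
            _ = - ∑ u ∈ S, ∑ v ∈ S, h u v := by rw [Finset.sum_comm]
        linarith
      have step3 : ∀ u, ∑ v, h u v = ∑ v ∈ S, h u v + ∑ v ∈ Sᶜ, h u v := by
        intro u
        rw [Finset.sum_add_sum_compl]
      rw [← step1]
      calc ∑ u ∈ S, ∑ v, h u v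
          = ∑ u ∈ S, (∑ v ∈ S, h u v + ∑ v ∈ Sᶜ, h u v) := by
            exact Finset.sum_congr rfl fun u _ => step3 u
        _ = (∑ u ∈ S, ∑ v ∈ S, h u v) + ∑ u ∈ S, ∑ v ∈ Sᶜ, h u v := by
            rw [Finset.sum_add_distrib]
        _ = ∑ u ∈ S, ∑ v ∈ Sᶜ, h u v := by rw [step2]; ring
    rw [cut g hg, cut f hf]
    apply Finset.sum_le_sum
    intro u hu
    apply Finset.sum_le_sum
    intro v hv
    have hu' : Relation.ReflTransGen (ResEdge N f) N.s u := by simpa [hSdef] using hu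
    have hv' : v ∉ S := by simpa using hv
    have hnr : ¬ ResEdge N f u v := by
      intro hre
      apply hv'
      simp only [hSdef, Finset.mem_filter, Finset.mem_univ, true_and]
      exact hu'.tail hre
    have hle : resCap N f u v ≤ 0 := not_lt.mp hnr
    have hfc : f u v = N.c u v := le_antisymm (hf.2.1 u v) (by simp only [resCap] at hle; linarith)
    calc g u v ≤ N.c u v := hg.2.1 u v
      _ = f u v := hfc.symm
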